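/- Let C = {v ∈ R^S : sp(v) ≤ 2·sp(h*), |V-ref(s) - V-ref(s') - (v(s) - v(s'))| ≤ w_{(s,s')} for all pairs (s,s')} be nonempty. If v1, v2 ∈ C, then the pointwise maximum v3 defined by v3(s) = max{v1(s), v2(s)} also belongs to C. -/
import Mathlib


open Finset

/-- The confidence region `C` (span bound plus pairwise difference constraints around a
reference vector) is closed under pointwise maximum. -/
theorem stmt7 {S : Type*} [Fintype S] [Nonempty S]
    (Vref : S → ℝ) (w : S → S → ℝ) (hw : ∀ s s', 0 ≤ w s s') (hstar : S → ℝ)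
    (C : Set (S → ℝ))
    (hC : C = {v | (univ.sup' univ_nonempty v - univ.inf' univ_nonempty v
        ≤ 2 * (univ.sup' univ_nonempty hstar - univ.inf' univ_nonempty hstar)) ∧
      ∀ s s', |Vref s - Vref s' - (v s - v s')| ≤ w s s'})
    (hne : C.Nonempty)
    (v₁ v₂ : S → ℝ) (h₁ : v₁ ∈ C) (h₂ : v₂ ∈ C) :
    (fun s => max (v₁ s) (v₂ s)) ∈ C := by
  subst hC
  obtain ⟨hs₁, hd₁⟩ := h₁
  obtain ⟨hs₂, hd₂⟩ := h₂
  constructor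
  · -- span bound
    have hsup : (univ : Finset S).sup' univ_nonempty (fun s => max (v₁ s) (v₂ s))
        ≤ max (univ.sup' univ_nonempty v₁) (univ.sup' univ_nonempty v₂) := by
      apply Finset.sup'_le
      intro s _
      exact max_le_max (Finset.le_sup' v₁ (mem_univ s)) (Finset.le_sup' v₂ (mem_univ s))
    have hinf : max (univ.inf' univ_nonempty v₁) (univ.inf' univ_nonempty v₂)
        ≤ (univ : Finset S).inf' univ_nonempty (fun s => max (v₁ s) (v₂ s)) := by
      apply Finset.le_inf'
      intro s _
      exact max_le_max (Finset.inf'_le v₁ (mem_univ s)) (Finset.inf'_le v₂ (mem_univ s))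
    rcases le_total (univ.sup' univ_nonempty v₁) (univ.sup' univ_nonempty v₂) with h | h <;>
      rcases le_total (univ.inf' univ_nonempty v₁) (univ.inf' univ_nonempty v₂) with h' | h' <;>
      simp only [max_eq_left, max_eq_right, h, h'] at hsup hinf <;> linarith
  · intro s s'
    have a1 := abs_le.mp (hd₁ s s')
    have a2 := abs_le.mp (hd₂ s s')
    rw [abs_le]
    rcases le_total (v₁ s) (v₂ s) with h | h <;>
      rcases le_total (v₁ s') (v₂ s') with h' | h' <;>
      simp only [max_eq_left, max_eq_right, h, h'] <;>
      constructor <;> linarith
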